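/- Let p_X be a probability vector on [d], let X be a random variable with P(X = j) = p_{X,j} for j ∈ [d], and let ε > 0. Then the unary-encoding privatization Z of X with parameter ε is a SG(17/4) random vector; in particular, for every unit vector u ∈ ℝ^d and every λ ∈ ℝ, E[exp(λ·uᵀ(Z − E[Z]))] ≤ exp(17λ²/8). -/

import Mathlib

open MeasureTheory ProbabilityTheory

noncomputable section

/-- `X` is sub-Gaussian with variance proxy `σ²`, written SG(σ²). -/
def IsSubGaussian {Ω : Type*} [MeasurableSpace Ω] (P : Measure Ω) (X : Ω → ℝ) (σ2 : ℝ) : Prop :=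
  ∀ l : ℝ, ∫ ω, Real.exp (l * (X ω - ∫ ω', X ω' ∂P)) ∂P ≤ Real.exp (l ^ 2 * σ2 / 2)

/-- Euclidean inner product on `Fin d → ℝ`. -/
def dotp {d : ℕ} (x y : Fin d → ℝ) : ℝ := ∑ j, x j * y j

/-- A random vector `Z` is SG(σ²) if `vᵀZ` is SG(‖v‖₂²σ²) for every `v`. -/
def IsSubGaussianVec {Ω : Type*} [MeasurableSpace Ω] (P : Measure Ω) {d : ℕ}
    (Z : Ω → Fin d → ℝ) (σ2 : ℝ) : Prop :=
  ∀ v : Fin d → ℝ, IsSubGaussian P (fun ω => dotp v (Z ω)) ((∑ j, (v j) ^ 2) * σ2)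

/-- The unary-encoding randomization function: coordinate `j` of the privatized vector built
from datum `x` and uniform auxiliary randomness `u`, with privacy parameter `ε`:
`R_j(x,u) = 1{x=j}·1{u ≤ e^{ε/2}/(e^{ε/2}+1)} + 1{x≠j}·1{u > e^{ε/2}/(e^{ε/2}+1)}`. -/
def ueR {d : ℕ} (ε : ℝ) (x j : Fin d) (u : ℝ) : ℝ :=
  if u ≤ Real.exp (ε / 2) / (Real.exp (ε / 2) + 1) then (if x = j then 1 else 0)
  else (if x = j then 0 else 1)

/-- The datum together with the auxiliary uniform variables, as one family. -/
def ueFam {Ω : Type*} {d : ℕ} (X : Ω → Fin d) (V : Fin d → Ω → ℝ) :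
    (i : Sum Unit (Fin d)) → Ω → Sum.elim (fun _ => Fin d) (fun _ => ℝ) i
  | Sum.inl _ => X
  | Sum.inr j => V j

/-- Measurable space structures for `ueFam`. -/
def ueFamMS {d : ℕ} :
    (i : Sum Unit (Fin d)) → MeasurableSpace (Sum.elim (fun _ => Fin d) (fun _ => ℝ) i)
  | Sum.inl _ => (inferInstance : MeasurableSpace (Fin d))
  | Sum.inr _ => (inferInstance : MeasurableSpace ℝ)


/-- Two-point Hoeffding lemma. -/
lemma bern_mgf_le {p : ℝ} (hp0 : 0 ≤ p) (hp1 : p ≤ 1) (s : ℝ) :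
    p * Real.exp (s * (1 - p)) + (1 - p) * Real.exp (-(s * p)) ≤ Real.exp (s ^ 2 / 8) := by
  have hD : ∀ x : ℝ, 0 < 1 - p + p * Real.exp x := by
    intro x
    rcases lt_or_ge (Real.exp x) 1 with h | h
    · nlinarith [Real.exp_pos x]
    · nlinarith
  set g : ℝ → ℝ := fun x => p * Real.exp x / (1 - p + p * Real.exp x) with hg
  have hg0 : ∀ x, 0 ≤ g x := fun x => div_nonneg (by positivity) (hD x).le
  have hg1 : ∀ x, g x ≤ 1 := by
    intro x
    rw [div_le_one (hD x)]
    nlinarith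
  set h : ℝ → ℝ := fun x => p + x / 4 - g x with hh
  have hder_g : ∀ x, HasDerivAt g (g x * (1 - g x)) x := by
    intro x
    have h1 : HasDerivAt (fun x => p * Real.exp x) (p * Real.exp x) x :=
      (Real.hasDerivAt_exp x).const_mul p
    have h2 : HasDerivAt (fun x => 1 - p + p * Real.exp x) (p * Real.exp x) x := by
      simpa using h1.const_add (1 - p)
    have := h1.div h2 (hD x).ne'
    refine this.congr_deriv ?_
    have hDx := (hD x).ne'
    simp only [hg]
    field_simp
  have hder_h : ∀ x, HasDerivAt h (1 / 4 - g x * (1 - g x)) x := by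
    intro x
    have : HasDerivAt (fun x : ℝ => p + x / 4) (1 / 4) x := by
      simpa using ((hasDerivAt_id x).div_const 4).const_add p
    exact this.sub (hder_g x)
  have hmono : Monotone h := by
    apply monotone_of_deriv_nonneg (fun x => (hder_h x).differentiableAt)
    intro x
    rw [(hder_h x).deriv]
    nlinarith [hg0 x, hg1 x, sq_nonneg (2 * g x - 1)]
  have hh0 : h 0 = 0 := by simp [hh, hg]
  set F : ℝ → ℝ := fun x => p * x + x ^ 2 / 8 - Real.log (1 - p + p * Real.exp x) with hF
  have hder_F : ∀ x, HasDerivAt F (h x) x := by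
    intro x
    have h1 : HasDerivAt (fun x : ℝ => p * x + x ^ 2 / 8) (p + x / 4) x := by
      have := ((hasDerivAt_pow 2 x).div_const 8).const_add (p * x)
      have h2 : HasDerivAt (fun y : ℝ => p * y) p x := by
        simpa using (hasDerivAt_id x).const_mul p
      refine (h2.add ((hasDerivAt_pow 2 x).div_const 8)).congr_deriv ?_
      ring
    have h2 : HasDerivAt (fun x => 1 - p + p * Real.exp x) (p * Real.exp x) x := by
      simpa using ((Real.hasDerivAt_exp x).const_mul p).const_add (1 - p)
    have h3 : HasDerivAt (fun x => Real.log (1 - p + p * Real.exp x))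
        (p * Real.exp x / (1 - p + p * Real.exp x)) x := h2.log (hD x).ne'
    exact h1.sub h3
  have hF0 : F 0 = 0 := by simp [hF]
  have hdiffF : Differentiable ℝ F := fun x => (hder_F x).differentiableAt
  have hderivF : ∀ x, deriv F x = h x := fun x => (hder_F x).deriv
  have hFnonneg : ∀ x, 0 ≤ F x := by
    intro x
    rcases le_or_gt 0 x with hx | hx
    · have hm : MonotoneOn F (Set.Ici 0) := by
        apply monotoneOn_of_deriv_nonneg (convex_Ici 0) hdiffF.continuous.continuousOn
          (fun y _ => (hdiffF y).differentiableWithinAt)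
        intro y hy
        rw [hderivF y, ← hh0]
        exact hmono (le_of_lt (by simpa using hy))
      have := hm (Set.mem_Ici.2 le_rfl) (Set.mem_Ici.2 hx) hx
      linarith [hF0]
    · have hm : AntitoneOn F (Set.Iic 0) := by
        apply antitoneOn_of_deriv_nonpos (convex_Iic 0) hdiffF.continuous.continuousOn
          (fun y _ => (hdiffF y).differentiableWithinAt)
        intro y hy
        rw [hderivF y, ← hh0]
        exact hmono (le_of_lt (by simpa using hy))
      have := hm (Set.mem_Iic.2 hx.le) (Set.mem_Iic.2 le_rfl) hx.le
      linarith [hF0]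
  have hkey : 1 - p + p * Real.exp s ≤ Real.exp (p * s + s ^ 2 / 8) := by
    rw [← Real.exp_log (hD s)]
    apply Real.exp_le_exp.mpr
    have := hFnonneg s
    simp only [hF] at this
    linarith
  have heq : p * Real.exp (s * (1 - p)) + (1 - p) * Real.exp (-(s * p))
      = Real.exp (-(s * p)) * (1 - p + p * Real.exp s) := by
    have h1 : Real.exp (s * (1 - p)) = Real.exp s * Real.exp (-(s * p)) := by
      rw [← Real.exp_add]; ring_nf
    rw [h1]; ring
  rw [heq]
  calc Real.exp (-(s * p)) * (1 - p + p * Real.exp s)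
      ≤ Real.exp (-(s * p)) * Real.exp (p * s + s ^ 2 / 8) := by
        apply mul_le_mul_of_nonneg_left hkey (Real.exp_pos _).le
    _ = Real.exp (s ^ 2 / 8) := by rw [← Real.exp_add]; ring_nf


/-- Per-coordinate MGF bound for the privatized bit. -/
lemma step_mgf {q : ℝ} (hq0 : 0 ≤ q) (hq1 : q ≤ 1) {a : ℝ} (ha : a = 0 ∨ a = 1) (s : ℝ) :
    q * Real.exp (s * a) + (1 - q) * Real.exp (s * (1 - a))
      ≤ Real.exp (s * (q * a + (1 - q) * (1 - a)) + s ^ 2 / 8) := by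
  rcases ha with rfl | rfl
  · -- a = 0 : q + (1-q) e^s ≤ exp(s(1-q)+s²/8); use p = 1-q
    have h := bern_mgf_le (p := 1 - q) (by linarith) (by linarith) s
    have h2 := mul_le_mul_of_nonneg_left h (Real.exp_pos (s * (1 - q))).le
    have E1 : Real.exp (s * (1 - q)) * Real.exp (s * (1 - (1 - q))) = Real.exp s := by
      rw [← Real.exp_add]; congr 1; ring
    have E2 : Real.exp (s * (1 - q)) * Real.exp (-(s * (1 - q))) = 1 := by
      rw [← Real.exp_add, show s * (1 - q) + -(s * (1 - q)) = 0 by ring, Real.exp_zero]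
    calc q * Real.exp (s * 0) + (1 - q) * Real.exp (s * (1 - 0))
        = Real.exp (s * (1 - q)) * ((1 - q) * Real.exp (s * (1 - (1 - q)))
            + (1 - (1 - q)) * Real.exp (-(s * (1 - q)))) := by
          simp only [mul_zero, Real.exp_zero, mul_one, sub_zero]
          linear_combination (-(1 - q)) * E1 - q * E2
      _ ≤ Real.exp (s * (1 - q)) * Real.exp (s ^ 2 / 8) := h2
      _ = Real.exp (s * (q * 0 + (1 - q) * (1 - 0)) + s ^ 2 / 8) := by
          rw [← Real.exp_add]; ring_nf
  · -- a = 1 : q e^s + (1-q) ≤ exp(sq+s²/8); use p = q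
    have h := bern_mgf_le (p := q) hq0 hq1 s
    have h2 := mul_le_mul_of_nonneg_left h (Real.exp_pos (s * q)).le
    have E1 : Real.exp (s * q) * Real.exp (s * (1 - q)) = Real.exp s := by
      rw [← Real.exp_add]; congr 1; ring
    have E2 : Real.exp (s * q) * Real.exp (-(s * q)) = 1 := by
      rw [← Real.exp_add, show s * q + -(s * q) = 0 by ring, Real.exp_zero]
    calc q * Real.exp (s * 1) + (1 - q) * Real.exp (s * (1 - 1))
        = Real.exp (s * q) * (q * Real.exp (s * (1 - q)) + (1 - q) * Real.exp (-(s * q))) := by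
          simp only [mul_one, sub_self, mul_zero, Real.exp_zero]
          linear_combination (-q) * E1 - (1 - q) * E2
      _ ≤ Real.exp (s * q) * Real.exp (s ^ 2 / 8) := h2
      _ = Real.exp (s * (q * 1 + (1 - q) * (1 - 1)) + s ^ 2 / 8) := by
          rw [← Real.exp_add]; ring_nf

lemma chord_exp {y : ℝ} (hy : |y| ≤ 1) (s : ℝ) :
    Real.exp (s * y) ≤ Real.cosh s + y * Real.sinh s := by
  have h1 : (0:ℝ) ≤ (1 - y) / 2 := by rw [abs_le] at hy; linarith [hy.2]
  have h2 : (0:ℝ) ≤ (1 + y) / 2 := by rw [abs_le] at hy; linarith [hy.1]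
  have h3 : (1 - y) / 2 + (1 + y) / 2 = 1 := by ring
  have := convexOn_exp.2 (Set.mem_univ (-s)) (Set.mem_univ s) h1 h2 h3
  simp only [smul_eq_mul] at this
  have he : (1 - y) / 2 * (-s) + (1 + y) / 2 * s = s * y := by ring
  rw [he] at this
  calc Real.exp (s * y) ≤ (1 - y) / 2 * Real.exp (-s) + (1 + y) / 2 * Real.exp s := this
    _ = Real.cosh s + y * Real.sinh s := by rw [Real.cosh_eq, Real.sinh_eq]; ring

lemma avg_exp_le {ι : Type*} [Fintype ι] (p y : ι → ℝ) (hp : ∀ i, 0 ≤ p i)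
    (hs : ∑ i, p i = 1) (hy : ∀ i, |y i| ≤ 1) (h0 : ∑ i, p i * y i = 0) (s : ℝ) :
    ∑ i, p i * Real.exp (s * y i) ≤ Real.exp (s ^ 2 / 2) := by
  calc ∑ i, p i * Real.exp (s * y i)
      ≤ ∑ i, p i * (Real.cosh s + y i * Real.sinh s) := by
        apply Finset.sum_le_sum
        exact fun i _ => mul_le_mul_of_nonneg_left (chord_exp (hy i) s) (hp i)
    _ = Real.cosh s := by
        simp only [mul_add]
        rw [Finset.sum_add_distrib, ← Finset.sum_mul, hs]
        have : ∑ i, p i * (y i * Real.sinh s) = (∑ i, p i * y i) * Real.sinh s := by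
          rw [Finset.sum_mul]; congr 1; ext i; ring
        rw [this, h0]; ring
    _ ≤ Real.exp (s ^ 2 / 2) := Real.cosh_le_exp_half_sq s


lemma integrable_of_bdd {Ω : Type*} [MeasurableSpace Ω] {P : Measure Ω} [IsProbabilityMeasure P]
    {f : Ω → ℝ} (hm : Measurable f) {C : ℝ} (h : ∀ ω, |f ω| ≤ C) : Integrable f P :=
  (integrable_const C).mono' hm.aestronglyMeasurable (Filter.Eventually.of_forall h)

lemma prod_int {ι : Type*} [DecidableEq ι] {Ω : Type*} [MeasurableSpace Ω] {μ : Measure Ω}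
    [IsProbabilityMeasure μ] {W : ι → Ω → ℝ}
    (hi : iIndepFun W μ) (hm : ∀ i, Measurable (W i))
    (hint : ∀ i, Integrable (W i) μ) (s : Finset ι) :
    Integrable (fun ω => ∏ i ∈ s, W i ω) μ ∧
      ∫ ω, ∏ i ∈ s, W i ω ∂μ = ∏ i ∈ s, ∫ ω, W i ω ∂μ := by
  induction s using Finset.induction_on with
  | empty => simp
  | insert a s hni ih =>
    have hind : IndepFun (∏ j ∈ s, W j) (W a) μ :=
      hi.indepFun_finset_prod_of_notMem hm hni
    have hps : (∏ j ∈ s, W j) = fun ω => ∏ j ∈ s, W j ω := by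
      funext ω; simp
    rw [hps] at hind
    have hfeq : (fun ω => ∏ i ∈ insert a s, W i ω) = fun ω => (∏ i ∈ s, W i ω) * W a ω := by
      funext ω; rw [Finset.prod_insert hni]; ring
    have hdefeq : ((fun ω => ∏ i ∈ s, W i ω) * W a) = (fun ω => (∏ i ∈ s, W i ω) * W a ω) := rfl
    constructor
    · have h2 := hind.integrable_mul ih.1 (hint a)
      rw [hdefeq] at h2
      rw [hfeq]; exact h2
    · have h2 := hind.integral_mul_eq_mul_integral ih.1.aestronglyMeasurable (hint a).aestronglyMeasurable
      rw [hdefeq] at h2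
      rw [hfeq, h2, Finset.prod_insert hni, ← ih.2]; ring


lemma int_step {Ω : Type*} [MeasurableSpace Ω] {P : Measure Ω} {V : Ω → ℝ}
    (hmV : Measurable V) (hunif : Measure.map V P = volume.restrict (Set.Icc (0:ℝ) 1))
    {q : ℝ} (hq0 : 0 ≤ q) (hq1 : q ≤ 1) (A C : ℝ) :
    ∫ ω, (if V ω ≤ q then A else C) ∂P = q * A + (1 - q) * C := by
  have hf : Measurable (fun u : ℝ => if u ≤ q then A else C) :=
    Measurable.ite measurableSet_Iic measurable_const measurable_const
  have h1 : ∫ ω, (if V ω ≤ q then A else C) ∂P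
      = ∫ u, (if u ≤ q then A else C) ∂(Measure.map V P) := by
    rw [integral_map hmV.aemeasurable hf.aestronglyMeasurable]
  rw [h1, hunif]
  have hsplit : Set.Icc (0:ℝ) 1 = Set.Icc 0 q ∪ Set.Ioc q 1 :=
    (Set.Icc_union_Ioc_eq_Icc hq0 hq1).symm
  have hdisj : Disjoint (Set.Icc (0:ℝ) q) (Set.Ioc q 1) := by
    rw [Set.disjoint_left]
    rintro x ⟨_, hx2⟩ ⟨hx3, _⟩
    exact absurd hx2 (not_le.2 hx3)
  have hbd : ∀ u : ℝ, |if u ≤ q then A else C| ≤ max |A| |C| := by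
    intro u; split
    · exact le_max_left _ _
    · exact le_max_right _ _
  have hint : ∀ s : Set ℝ, MeasurableSet s → volume s < ⊤ →
      IntegrableOn (fun u : ℝ => if u ≤ q then A else C) s volume := by
    intro s hs hvol
    apply Integrable.mono' (integrableOn_const (C := max |A| |C|) hvol.ne)
      (hf.aestronglyMeasurable.restrict)
    exact Filter.Eventually.of_forall hbd
  rw [hsplit, setIntegral_union hdisj measurableSet_Ioc
    (hint _ measurableSet_Icc (by rw [Real.volume_Icc]; exact ENNReal.ofReal_lt_top))
    (hint _ measurableSet_Ioc (by rw [Real.volume_Ioc]; exact ENNReal.ofReal_lt_top))]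
  have e1 : ∫ u in Set.Icc (0:ℝ) q, (if u ≤ q then A else C) ∂volume
      = ∫ _ in Set.Icc (0:ℝ) q, A ∂volume := by
    apply setIntegral_congr_fun measurableSet_Icc
    intro x hx; exact if_pos hx.2
  have e2 : ∫ u in Set.Ioc q 1, (if u ≤ q then A else C) ∂volume
      = ∫ _ in Set.Ioc q 1, C ∂volume := by
    apply setIntegral_congr_fun measurableSet_Ioc
    intro x hx; exact if_neg (not_le.2 hx.1)
  rw [e1, e2, setIntegral_const, setIntegral_const, Real.volume_real_Icc_of_le hq0,
    Real.volume_real_Ioc_of_le hq1]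
  simp only [smul_eq_mul]
  ring

def gfun {d : ℕ} (ε : ℝ) (x : Fin d) (c : Fin d → ℝ) :
    ∀ i : Sum Unit (Fin d), Sum.elim (fun _ => Fin d) (fun _ => ℝ) i → ℝ
  | Sum.inl _ => fun y : Fin d => if y = x then (1:ℝ) else 0
  | Sum.inr j => fun u : ℝ => Real.exp (c j * ueR ε x j u)

/-- the unary-encoding privatization of a multinomial datum is an SG(17/4)
random vector. -/
theorem stmt_11 (Ω : Type) (_ : MeasurableSpace Ω) (P : Measure Ω) [IsProbabilityMeasure P]
    (d : ℕ) (ε : ℝ) (hε : 0 < ε) (pX : Fin d → ℝ)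
    (hpX : ∀ j, 0 ≤ pX j) (hpXsum : ∑ j, pX j = 1)
    (X : Ω → Fin d) (V : Fin d → Ω → ℝ)
    (hmX : Measurable X) (hmV : ∀ j, Measurable (V j))
    (hlaw : ∀ j, P {ω | X ω = j} = ENNReal.ofReal (pX j))
    (hindep : iIndepFun (m := ueFamMS) (ueFam X V) P)
    (hunif : ∀ j, Measure.map (V j) P = volume.restrict (Set.Icc (0 : ℝ) 1)) :
    IsSubGaussianVec P (fun ω j => ueR ε (X ω) j (V j ω)) (17 / 4) := by
  intro v l
  set q : ℝ := Real.exp (ε / 2) / (Real.exp (ε / 2) + 1) with hqdef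
  have hexp_pos := Real.exp_pos (ε / 2)
  have hq0 : 0 ≤ q := le_of_lt (div_pos hexp_pos (by linarith))
  have hq1 : q ≤ 1 := by rw [hqdef, div_le_one (by linarith)]; linarith
  set R2 : ℝ := ∑ j, v j ^ 2 with hR2def
  have hR2nn : 0 ≤ R2 := Finset.sum_nonneg fun j _ => sq_nonneg _
  -- the privatized coordinates
  set Z : Ω → Fin d → ℝ := fun ω j => ueR ε (X ω) j (V j ω) with hZdef
  have hueR : ∀ (x j : Fin d) (u : ℝ), ueR (d := d) ε x j u
      = if u ≤ q then (if x = j then (1:ℝ) else 0) else (if x = j then 0 else 1) :=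
    fun _ _ _ => rfl
  have hueR01 : ∀ (x j : Fin d) (u : ℝ), ueR (d := d) ε x j u = 0 ∨ ueR ε x j u = 1 := by
    intro x j u
    rw [hueR]
    split <;> split <;> simp
  -- measurability of coordinates, for fixed x and for X ω
  have hmind : ∀ x : Fin d, Measurable (fun ω => if X ω = x then (1:ℝ) else 0) := by
    intro x
    exact (measurable_of_countable (fun y : Fin d => if y = x then (1:ℝ) else 0)).comp hmX
  have hmstep : ∀ (A C : ℝ) (j : Fin d), Measurable (fun ω => if V j ω ≤ q then A else C) := by
    intro A C j
    exact Measurable.ite ((hmV j) measurableSet_Iic) measurable_const measurable_const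
  have hmZx : ∀ (x j : Fin d), Measurable (fun ω => ueR ε x j (V j ω)) := by
    intro x j
    simp only [hueR]
    exact hmstep _ _ j
  -- indicator integral
  have hPX : ∀ x : Fin d, ∫ ω, (if X ω = x then (1:ℝ) else 0) ∂P = pX x := by
    intro x
    have h1 : (fun ω => if X ω = x then (1:ℝ) else 0)
        = Set.indicator (X ⁻¹' {x}) (fun _ => (1:ℝ)) := by
      funext ω
      by_cases h : X ω = x <;> simp [Set.indicator_apply, Set.mem_preimage, h]
    have h2 : X ⁻¹' {x} = {ω | X ω = x} := by ext ω; simp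
    rw [h1, integral_indicator_const (1:ℝ) (hmX (measurableSet_singleton x)), h2, measureReal_def, hlaw x,
      ENNReal.toReal_ofReal (hpX x)]
    simp
  -- step integrals
  have hstepint : ∀ (A C : ℝ) (j : Fin d),
      ∫ ω, (if V j ω ≤ q then A else C) ∂P = q * A + (1 - q) * C :=
    fun A C j => int_step (hmV j) (hunif j) hq0 hq1 A C
  -- conditional means
  set μc : Fin d → Fin d → ℝ :=
    fun x j => q * (if x = j then 1 else 0) + (1 - q) * (if x = j then 0 else 1) with hμdef
  set m : Fin d → ℝ := fun x => ∑ j, v j * μc x j with hmdef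
  -- the dot product
  set D : Ω → ℝ := fun ω => dotp v (Z ω) with hDdef
  have hDeq : ∀ ω, D ω = ∑ j, v j * ueR ε (X ω) j (V j ω) := fun ω => rfl
  -- MEAN COMPUTATION
  have hZjint : ∀ (x j : Fin d),
      ∫ ω, (if X ω = x then (1:ℝ) else 0) * ueR ε x j (V j ω) ∂P = pX x * μc x j := by
    intro x j
    have hbase : IndepFun X (V j) P := by
      have hne : (Sum.inl () : Sum Unit (Fin d)) ≠ Sum.inr j := by simp
      exact hindep.indepFun hne
    have hmstep2 : Measurable (fun u : ℝ => ueR ε x j u) := by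
      simp only [hueR]
      exact Measurable.ite measurableSet_Iic measurable_const measurable_const
    have hcomp : IndepFun (fun ω => if X ω = x then (1:ℝ) else 0)
        (fun ω => ueR ε x j (V j ω)) P := by
      have := hbase.comp (φ := fun y : Fin d => if y = x then (1:ℝ) else 0)
        (ψ := fun u : ℝ => ueR ε x j u)
        (measurable_of_countable _) hmstep2
      exact this
    have hint1 : Integrable (fun ω => if X ω = x then (1:ℝ) else 0) P :=
      integrable_of_bdd (hmind x) (C := 1) (by intro ω; split <;> simp)
    have hint2 : Integrable (fun ω => ueR ε x j (V j ω)) P := by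
      apply integrable_of_bdd (hmZx x j) (C := 1)
      intro ω
      rcases hueR01 x j (V j ω) with h | h <;> rw [h] <;> norm_num
    have := hcomp.integral_mul_eq_mul_integral hint1.aestronglyMeasurable hint2.aestronglyMeasurable
    have hdefeq : ((fun ω => if X ω = x then (1:ℝ) else 0) * fun ω => ueR ε x j (V j ω))
        = fun ω => (if X ω = x then (1:ℝ) else 0) * ueR ε x j (V j ω) := rfl
    rw [hdefeq] at this
    rw [this, hPX x]
    congr 1
    simp only [hueR]
    rw [hstepint]
  have hZint : ∀ j : Fin d,
      ∫ ω, ueR ε (X ω) j (V j ω) ∂P = ∑ x, pX x * μc x j := by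
    intro j
    have hpt : ∀ ω, ueR ε (X ω) j (V j ω)
        = ∑ x, (if X ω = x then (1:ℝ) else 0) * ueR ε x j (V j ω) := by
      intro ω
      have h1 : ∀ x, (if X ω = x then (1:ℝ) else 0) * ueR ε x j (V j ω)
          = if X ω = x then ueR ε x j (V j ω) else 0 := by
        intro x; split <;> simp_all
      simp only [h1]
      rw [Finset.sum_ite_eq]
      simp
    calc ∫ ω, ueR ε (X ω) j (V j ω) ∂P
        = ∫ ω, ∑ x, (if X ω = x then (1:ℝ) else 0) * ueR ε x j (V j ω) ∂P := by
          congr 1; funext ω; exact hpt ω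
      _ = ∑ x, ∫ ω, (if X ω = x then (1:ℝ) else 0) * ueR ε x j (V j ω) ∂P := by
          apply integral_finset_sum
          intro x _
          apply integrable_of_bdd ((hmind x).mul (hmZx x j)) (C := 1)
          intro ω
          simp only [Pi.mul_apply, Function.comp_apply]
          rw [abs_mul]
          rcases hueR01 x j (V j ω) with h | h <;> rw [h] <;> split <;> norm_num
      _ = ∑ x, pX x * μc x j := Finset.sum_congr rfl fun x _ => hZjint x j
  have hmZ : ∀ j : Fin d, Measurable (fun ω => ueR ε (X ω) j (V j ω)) := by
    intro j
    simp only [hueR]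
    exact Measurable.ite ((hmV j) measurableSet_Iic) (hmind j)
      ((measurable_of_countable (fun y : Fin d => if y = j then (0:ℝ) else 1)).comp hmX)
  have hZjintegrable : ∀ j : Fin d, Integrable (fun ω => v j * ueR ε (X ω) j (V j ω)) P := by
    intro j
    apply integrable_of_bdd ((hmZ j).const_mul (v j)) (C := |v j|)
    intro ω
    rw [abs_mul]
    rcases hueR01 (X ω) j (V j ω) with h | h <;> rw [h] <;> simp
  have hMean : ∫ ω, D ω ∂P = ∑ x, pX x * m x := by
    calc ∫ ω, D ω ∂P = ∑ j, ∫ ω, v j * ueR ε (X ω) j (V j ω) ∂P := by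
          rw [show (fun ω => D ω) = fun ω => ∑ j, v j * ueR ε (X ω) j (V j ω) from
            funext hDeq]
          exact integral_finset_sum _ fun j _ => hZjintegrable j
      _ = ∑ j, v j * ∑ x, pX x * μc x j := by
          refine Finset.sum_congr rfl fun j _ => ?_
          rw [integral_const_mul, hZint j]
      _ = ∑ x, pX x * m x := by
          simp only [hmdef, Finset.mul_sum]
          rw [Finset.sum_comm]
          refine Finset.sum_congr rfl fun x _ => Finset.sum_congr rfl fun j _ => by ring
  -- MGF COMPUTATION
  set I : Fin d → ℝ := fun x => ∏ j, (q * Real.exp (l * v j * (if x = j then 1 else 0))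
    + (1 - q) * Real.exp (l * v j * (if x = j then 0 else 1))) with hIdef
  have hterm : ∀ x : Fin d, ∫ ω, (if X ω = x then (1:ℝ) else 0)
      * ∏ j, Real.exp (l * v j * ueR ε x j (V j ω)) ∂P = pX x * I x := by
    intro x
    -- the composed independent family
    set g : ∀ i : Sum Unit (Fin d), Sum.elim (fun _ => Fin d) (fun _ => ℝ) i → ℝ :=
      gfun ε x (fun j => l * v j) with hgdef
    have hgm : ∀ i, Measurable[ueFamMS i] (g i) := by
      rintro (u | j)
      · show Measurable (fun y : Fin d => if y = x then (1:ℝ) else 0)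
        exact measurable_of_countable _
      · show Measurable (fun u : ℝ => Real.exp (l * v j * ueR ε x j u))
        simp only [hueR]
        exact ((Measurable.ite measurableSet_Iic measurable_const
          measurable_const).const_mul (l * v j)).exp
    have hW : iIndepFun
        (fun i => g i ∘ ueFam X V i) P := hindep.comp g hgm
    have hWm : ∀ i, Measurable (g i ∘ ueFam X V i) := by
      rintro (u | j)
      · show Measurable ((fun y : Fin d => if y = x then (1:ℝ) else 0) ∘ X)
        exact (measurable_of_countable _).comp hmX
      · show Measurable ((fun u : ℝ => Real.exp (l * v j * ueR ε x j u)) ∘ (V j))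
        exact (hgm (Sum.inr j)).comp (hmV j)
    have hWint : ∀ i, Integrable (g i ∘ ueFam X V i) P := by
      intro i
      match i with
      | Sum.inl _ =>
        apply integrable_of_bdd (hWm _) (C := 1)
        intro ω
        show |if X ω = x then (1:ℝ) else 0| ≤ 1
        split <;> simp
      | Sum.inr j =>
        apply integrable_of_bdd (hWm _) (C := Real.exp |l * v j|)
        intro ω
        show |Real.exp (l * v j * ueR ε x j (V j ω))| ≤ Real.exp |l * v j|
        rw [abs_of_nonneg (Real.exp_pos _).le, Real.exp_le_exp]
        rcases hueR01 x j (V j ω) with h | h <;> rw [h]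
        · simp [abs_nonneg]; positivity
        · rw [mul_one]; exact le_abs_self _
    have hfact := (prod_int hW hWm hWint Finset.univ).2
    have hpteq : ∀ ω, (∏ i : Sum Unit (Fin d), (g i ∘ ueFam X V i) ω)
        = (if X ω = x then (1:ℝ) else 0) * ∏ j, Real.exp (l * v j * ueR ε x j (V j ω)) := by
      intro ω
      rw [Fintype.prod_sum_type,
        Fintype.prod_unique (fun a : Unit => (g (Sum.inl a) ∘ ueFam X V (Sum.inl a)) ω)]
      rfl
    have hL : ∫ ω, (if X ω = x then (1:ℝ) else 0)
        * ∏ j, Real.exp (l * v j * ueR ε x j (V j ω)) ∂P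
        = ∫ ω, ∏ i : Sum Unit (Fin d), (g i ∘ ueFam X V i) ω ∂P := by
      congr 1; funext ω; rw [hpteq ω]
    rw [hL, hfact, Fintype.prod_sum_type]
    congr 1
    · have : ∀ u : Unit, ∫ ω, (g (Sum.inl u) ∘ ueFam X V (Sum.inl u)) ω ∂P = pX x := by
        intro u
        have : (g (Sum.inl u) ∘ ueFam X V (Sum.inl u))
            = fun ω => if X ω = x then (1:ℝ) else 0 := rfl
        rw [this, hPX x]
      exact (Fintype.prod_unique _).trans (this PUnit.unit)
    · refine Finset.prod_congr rfl fun j _ => ?_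
      have h1 : (g (Sum.inr j) ∘ ueFam X V (Sum.inr j))
          = fun ω => Real.exp (l * v j * ueR ε x j (V j ω)) := rfl
      rw [h1]
      have h2 : (fun ω => Real.exp (l * v j * ueR ε x j (V j ω)))
          = fun ω => if V j ω ≤ q then Real.exp (l * v j * (if x = j then 1 else 0))
            else Real.exp (l * v j * (if x = j then 0 else 1)) := by
        funext ω
        simp only [hueR]
        split <;> rfl
      rw [h2, hstepint]
  have htermint : ∀ x : Fin d, Integrable (fun ω => (if X ω = x then (1:ℝ) else 0)
      * ∏ j, Real.exp (l * v j * ueR ε x j (V j ω))) P := by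
    intro x
    apply integrable_of_bdd ((hmind x).mul (Finset.measurable_prod Finset.univ
      fun j _ => (Real.measurable_exp.comp ((hmZx x j).const_mul (l * v j))))) 
      (C := ∏ j, Real.exp |l * v j|)
    intro ω
    simp only [Pi.mul_apply, Function.comp_apply]
    rw [abs_mul]
    have h1 : |if X ω = x then (1:ℝ) else 0| ≤ 1 := by split <;> norm_num
    have h2 : |∏ j, Real.exp (l * v j * ueR ε x j (V j ω))| ≤ ∏ j, Real.exp |l * v j| := by
      rw [abs_of_nonneg (Finset.prod_nonneg fun j _ => (Real.exp_pos _).le)]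
      apply Finset.prod_le_prod (fun j _ => (Real.exp_pos _).le)
      intro j _
      rw [Real.exp_le_exp]
      rcases hueR01 x j (V j ω) with h | h <;> rw [h]
      · simp [abs_nonneg]; positivity
      · rw [mul_one]; exact le_abs_self _
    calc |if X ω = x then (1:ℝ) else 0| * |∏ j, Real.exp (l * v j * ueR ε x j (V j ω))|
        ≤ 1 * ∏ j, Real.exp |l * v j| := by
          apply mul_le_mul h1 h2 (abs_nonneg _) zero_le_one
      _ = ∏ j, Real.exp |l * v j| := one_mul _
  have hMGF : ∫ ω, Real.exp (l * D ω) ∂P = ∑ x, pX x * I x := by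
    have hpt : ∀ ω, Real.exp (l * D ω) = ∑ x, (if X ω = x then (1:ℝ) else 0)
        * ∏ j, Real.exp (l * v j * ueR ε x j (V j ω)) := by
      intro ω
      have h1 : ∀ x, (if X ω = x then (1:ℝ) else 0)
          * ∏ j, Real.exp (l * v j * ueR ε x j (V j ω))
          = if X ω = x then ∏ j, Real.exp (l * v j * ueR ε x j (V j ω)) else 0 := by
        intro x; split <;> simp_all
      simp only [h1]
      rw [Finset.sum_ite_eq]
      simp only [Finset.mem_univ, if_true]
      rw [← Real.exp_sum]
      congr 1
      rw [hDeq ω, Finset.mul_sum]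
      exact Finset.sum_congr rfl fun j _ => by ring
    calc ∫ ω, Real.exp (l * D ω) ∂P
        = ∫ ω, ∑ x, (if X ω = x then (1:ℝ) else 0)
            * ∏ j, Real.exp (l * v j * ueR ε x j (V j ω)) ∂P := by
          congr 1; funext ω; exact hpt ω
      _ = ∑ x, ∫ ω, (if X ω = x then (1:ℝ) else 0)
            * ∏ j, Real.exp (l * v j * ueR ε x j (V j ω)) ∂P :=
          integral_finset_sum _ fun x _ => htermint x
      _ = ∑ x, pX x * I x := Finset.sum_congr rfl fun x _ => hterm x
  set M : ℝ := ∫ ω, D ω ∂P with hMdef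
  have main : ∫ ω, Real.exp (l * (D ω - M)) ∂P ≤ Real.exp (l ^ 2 * (R2 * (17 / 4)) / 2) := by
    by_cases hR2z : R2 = 0
    · -- trivial case v = 0
      have hv0 : ∀ j, v j = 0 := by
        intro j
        have := (Finset.sum_eq_zero_iff_of_nonneg (fun j _ => sq_nonneg (v j))).1 hR2z j
          (Finset.mem_univ j)
        exact (pow_eq_zero_iff two_ne_zero).1 this
      have hD0 : ∀ ω, D ω = 0 := by
        intro ω
        rw [hDeq]
        exact Finset.sum_eq_zero fun j _ => by rw [hv0 j]; ring
      have hM0 : M = 0 := by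
        rw [hMdef, show (fun ω => D ω) = fun _ => (0:ℝ) from funext hD0]
        simp
      rw [show (fun ω => Real.exp (l * (D ω - M))) = fun _ => (1:ℝ) from
        funext fun ω => by rw [hD0 ω, hM0]; simp]
      rw [integral_const, probReal_univ]
      simp only [ENNReal.toReal_one, smul_eq_mul, one_mul, mul_one]
      rw [hR2z]
      simp [Real.exp_nonneg]
    · have hR2pos : 0 < R2 := lt_of_le_of_ne hR2nn (Ne.symm hR2z)
      set R : ℝ := Real.sqrt R2 with hRdef
      have hRpos : 0 < R := Real.sqrt_pos.2 hR2pos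
      have hRsq : R ^ 2 = R2 := Real.sq_sqrt hR2nn
      set S : ℝ := ∑ j, v j with hSdef
      set vb : ℝ := ∑ x, pX x * v x with hvbdef
      have hmx : ∀ x, m x = (1 - q) * S + (2 * q - 1) * v x := by
        intro x
        have h1 : m x = ∑ j, ((1 - q) * v j + (if x = j then (2 * q - 1) * v j else 0)) := by
          rw [hmdef]
          refine Finset.sum_congr rfl fun j _ => ?_
          by_cases h : x = j <;> simp [hμdef, h] <;> ring
        rw [h1, Finset.sum_add_distrib, ← Finset.mul_sum, Finset.sum_ite_eq]
        simp [hSdef]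
      have hM : M = (1 - q) * S + (2 * q - 1) * vb := by
        calc M = ∑ x, pX x * m x := hMean
          _ = ∑ x, (pX x * ((1 - q) * S) + (2 * q - 1) * (pX x * v x)) := by
              refine Finset.sum_congr rfl fun x _ => ?_
              rw [hmx x]; ring
          _ = (1 - q) * S + (2 * q - 1) * vb := by
              rw [Finset.sum_add_distrib, ← Finset.sum_mul, hpXsum, ← Finset.mul_sum,
                ← hvbdef]
              ring
      have hmM : ∀ x, m x - M = (2 * q - 1) * (v x - vb) := by
        intro x; rw [hmx x, hM]; ring
      have hvx : ∀ x, |v x| ≤ R := by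
        intro x
        have h1 : v x ^ 2 ≤ R2 := by
          rw [hR2def]
          exact Finset.single_le_sum (f := fun j => v j ^ 2) (fun j _ => sq_nonneg _)
            (Finset.mem_univ x)
        calc |v x| = Real.sqrt (v x ^ 2) := (Real.sqrt_sq_eq_abs _).symm
          _ ≤ Real.sqrt R2 := Real.sqrt_le_sqrt h1
      have hvb : |vb| ≤ R := by
        rw [hvbdef]
        calc |∑ x, pX x * v x| ≤ ∑ x, |pX x * v x| := Finset.abs_sum_le_sum_abs _ _
          _ ≤ ∑ x, pX x * R := by
              refine Finset.sum_le_sum fun x _ => ?_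
              rw [abs_mul, abs_of_nonneg (hpX x)]
              exact mul_le_mul_of_nonneg_left (hvx x) (hpX x)
          _ = R := by rw [← Finset.sum_mul, hpXsum, one_mul]
      have h2q : |2 * q - 1| ≤ 1 := abs_le.2 ⟨by linarith, by linarith⟩
      have hbound : ∀ x, |m x - M| ≤ 2 * R := by
        intro x
        rw [hmM x, abs_mul]
        have habs : |v x - vb| ≤ |v x| + |vb| := abs_sub _ _
        calc |2 * q - 1| * |v x - vb| ≤ 1 * (|v x| + |vb|) :=
              mul_le_mul h2q habs (abs_nonneg _) zero_le_one
          _ ≤ 1 * (R + R) := by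
              have := add_le_add (hvx x) hvb
              linarith
          _ = 2 * R := by ring
      have houter : ∑ x, pX x * Real.exp (l * (m x - M))
          ≤ Real.exp ((l * (2 * R)) ^ 2 / 2) := by
        have hy : ∀ x, |(m x - M) / (2 * R)| ≤ 1 := by
          intro x
          rw [abs_div, abs_of_pos (by linarith : (0:ℝ) < 2 * R), div_le_one (by linarith)]
          exact hbound x
        have hmean0 : ∑ x, pX x * ((m x - M) / (2 * R)) = 0 := by
          calc ∑ x, pX x * ((m x - M) / (2 * R))
              = (∑ x, (pX x * m x - pX x * M)) / (2 * R) := by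
                rw [Finset.sum_div]
                exact Finset.sum_congr rfl fun x _ => by ring
            _ = 0 := by
                rw [Finset.sum_sub_distrib, ← Finset.sum_mul, hpXsum, one_mul, ← hMean]
                simp
        have hkey := avg_exp_le pX (fun x => (m x - M) / (2 * R)) hpX hpXsum hy hmean0
          (l * (2 * R))
        calc ∑ x, pX x * Real.exp (l * (m x - M))
            = ∑ x, pX x * Real.exp ((l * (2 * R)) * ((m x - M) / (2 * R))) := by
              refine Finset.sum_congr rfl fun x _ => ?_
              congr 2
              field_simp
            _ ≤ Real.exp ((l * (2 * R)) ^ 2 / 2) := hkey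
      have hIle : ∀ x, I x ≤ Real.exp (l * m x + l ^ 2 * R2 / 8) := by
        intro x
        have hcompl : ∀ j : Fin d, (if x = j then (0:ℝ) else 1)
            = 1 - (if x = j then 1 else 0) := by
          intro j; split <;> norm_num
        have hprod : I x ≤ ∏ j, Real.exp ((l * v j) * (q * (if x = j then 1 else 0)
            + (1 - q) * (1 - (if x = j then 1 else 0))) + (l * v j) ^ 2 / 8) := by
          rw [hIdef]
          refine Finset.prod_le_prod (fun j _ => add_nonneg (mul_nonneg hq0
            (Real.exp_pos _).le) (mul_nonneg (by linarith) (Real.exp_pos _).le))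
            (fun j _ => ?_)
          rw [hcompl j]
          exact step_mgf hq0 hq1 (a := if x = j then (1:ℝ) else 0)
            (by split <;> simp) (l * v j)
        refine hprod.trans (le_of_eq ?_)
        rw [← Real.exp_sum]
        congr 1
        rw [Finset.sum_add_distrib]
        congr 1
        · rw [hmdef, Finset.mul_sum]
          refine Finset.sum_congr rfl fun j _ => ?_
          simp only [hμdef]
          by_cases h : x = j <;> simp [h] <;> ring
        · rw [hR2def, Finset.mul_sum, Finset.sum_div]
          exact Finset.sum_congr rfl fun j _ => by ring
      have hsum_le : ∑ x, pX x * I x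
          ≤ Real.exp (l ^ 2 * R2 / 8) * ∑ x, pX x * Real.exp (l * m x) := by
        calc ∑ x, pX x * I x
            ≤ ∑ x, pX x * Real.exp (l * m x + l ^ 2 * R2 / 8) :=
              Finset.sum_le_sum fun x _ => mul_le_mul_of_nonneg_left (hIle x) (hpX x)
          _ = ∑ x, Real.exp (l ^ 2 * R2 / 8) * (pX x * Real.exp (l * m x)) :=
              Finset.sum_congr rfl fun x _ => by rw [Real.exp_add]; ring
          _ = Real.exp (l ^ 2 * R2 / 8) * ∑ x, pX x * Real.exp (l * m x) :=
              (Finset.mul_sum Finset.univ (fun x => pX x * Real.exp (l * m x))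
                (Real.exp (l ^ 2 * R2 / 8))).symm
      have hsplit : ∫ ω, Real.exp (l * (D ω - M)) ∂P
          = Real.exp (-(l * M)) * ∫ ω, Real.exp (l * D ω) ∂P := by
        rw [← integral_const_mul]
        congr 1; funext ω
        rw [← Real.exp_add]
        congr 1; ring
      rw [hsplit, hMGF]
      calc Real.exp (-(l * M)) * (∑ x, pX x * I x)
          ≤ Real.exp (-(l * M)) * (Real.exp (l ^ 2 * R2 / 8)
              * ∑ x, pX x * Real.exp (l * m x)) :=
            mul_le_mul_of_nonneg_left hsum_le (Real.exp_pos _).le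
        _ = Real.exp (l ^ 2 * R2 / 8) * (Real.exp (-(l * M))
              * ∑ x, pX x * Real.exp (l * m x)) := by ring
        _ = Real.exp (l ^ 2 * R2 / 8) * ∑ x, Real.exp (-(l * M))
              * (pX x * Real.exp (l * m x)) :=
            congrArg (Real.exp (l ^ 2 * R2 / 8) * ·)
              (Finset.mul_sum Finset.univ (fun x => pX x * Real.exp (l * m x))
                (Real.exp (-(l * M))))
        _ = Real.exp (l ^ 2 * R2 / 8) * ∑ x, pX x * Real.exp (l * (m x - M)) := by
            refine congrArg _ (Finset.sum_congr rfl fun x _ => ?_)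
            rw [show Real.exp (-(l * M)) * (pX x * Real.exp (l * m x))
              = pX x * (Real.exp (-(l * M)) * Real.exp (l * m x)) from by ring,
              ← Real.exp_add, show -(l * M) + l * m x = l * (m x - M) from by ring]
        _ ≤ Real.exp (l ^ 2 * R2 / 8) * Real.exp ((l * (2 * R)) ^ 2 / 2) :=
            mul_le_mul_of_nonneg_left houter (Real.exp_pos _).le
        _ = Real.exp (l ^ 2 * (R2 * (17 / 4)) / 2) := by
            rw [← Real.exp_add]
            congr 1
            rw [show (l * (2 * R)) ^ 2 = 4 * l ^ 2 * R ^ 2 from by ring, hRsq]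
            ring
  exact main
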